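/- Let A, B, C, D : ℕ → ℕ be finitely supported nonincreasing sequences. Writing ⊕ for pointwise addition, one has merge(A ⊕ B, C ⊕ D) ≤ merge(A, C) ⊕ merge(B, D) in the lexicographic order. -/

import Mathlib

/-- A sequence is finitely supported if it is eventually zero. -/
def FinSupported (A : ℕ → ℕ) : Prop :=
  ∃ N, ∀ n, N ≤ n → A n = 0

/-- The lexicographic order on sequences: `A ≤ B` iff `A = B` or at the smallest index
where they differ, the entry of `A` is smaller. -/
def LexLe (A B : ℕ → ℕ) : Prop :=
  A = B ∨ ∃ n, (∀ m, m < n → A m = B m) ∧ A n < B n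

/-- The length of a finitely supported sequence: the least `N` such that `X n = 0`
for all `n ≥ N`. -/
noncomputable def len (X : ℕ → ℕ) : ℕ :=
  sInf {N | ∀ n, N ≤ n → X n = 0}

/-- The multiset of nonzero values (with multiplicity) of a finitely supported sequence. -/
noncomputable def vals (A : ℕ → ℕ) : Multiset ℕ :=
  Multiset.filter (fun x => x ≠ 0) (((List.range (len A)).map A : List ℕ) : Multiset ℕ)

/-- Merge of two finitely supported sequences: the nonincreasing finitely supported
sequence whose multiset of nonzero values is the multiset sum of those of `A` and `B`
(concatenate and sort into nonincreasing order). -/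
noncomputable def merge (A B : ℕ → ℕ) : ℕ → ℕ :=
  fun n => (((vals A + vals B).sort (· ≤ ·)).reverse).getD n 0

/- ### Auxiliary material -/

/-- The list of elements of `M` sorted in nonincreasing order. -/
noncomputable def sortDesc (M : Multiset ℕ) : List ℕ := (M.sort (· ≤ ·)).reverse

lemma coe_sortDesc (M : Multiset ℕ) : ((sortDesc M : List ℕ) : Multiset ℕ) = M := by
  rw [sortDesc, Multiset.coe_reverse, Multiset.sort_eq]

lemma sortDesc_sorted (M : Multiset ℕ) : (sortDesc M).Pairwise (· ≥ ·) := by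
  have := Multiset.pairwise_sort M (· ≤ ·)
  rw [sortDesc, List.pairwise_reverse]
  exact this

lemma length_sortDesc (M : Multiset ℕ) : (sortDesc M).length = Multiset.card M := by
  rw [sortDesc, List.length_reverse, Multiset.length_sort]

lemma sum_range_getD (l : List ℕ) (k : ℕ) :
    ∑ i ∈ Finset.range k, l.getD i 0 = (l.take k).sum := by
  induction k with
  | zero => simp
  | succ k ih =>
    rw [Finset.sum_range_succ, ih]
    by_cases h : k < l.length
    · rw [List.sum_take_succ _ _ h, List.getD_eq_getElem _ _ h]
    · push_neg at h
      rw [List.take_of_length_le h, List.take_of_length_le (le_trans h (Nat.le_succ _)),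
        List.getD_eq_default _ _ h]
      omega

lemma take_succ_sum (l : List ℕ) (k : ℕ) :
    (l.take (k + 1)).sum = (l.take k).sum + l.getD k 0 := by
  rw [← sum_range_getD, ← sum_range_getD, Finset.sum_range_succ]

lemma getD_le_of_forall {l : List ℕ} {a : ℕ} (h : ∀ x ∈ l, x ≤ a) (k : ℕ) :
    l.getD k 0 ≤ a := by
  by_cases hk : k < l.length
  · rw [List.getD_eq_getElem _ _ hk]; exact h _ (List.getElem_mem hk)
  · rw [List.getD_eq_default _ _ (not_lt.mp hk)]; exact Nat.zero_le _

lemma take_sum_le {l₁ l₂ : List ℕ} (h : List.Sublist l₁ l₂) (hs : l₂.Pairwise (· ≥ ·)) (k : ℕ) :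
    (l₁.take k).sum ≤ (l₂.take k).sum := by
  induction h generalizing k with
  | slnil => simp
  | @cons l₁ l₂ a h ih =>
    rcases k with _ | k
    · simp
    · have hs' : l₂.Pairwise (· ≥ ·) := hs.of_cons
      have hle : ∀ x ∈ l₂, x ≤ a := fun x hx => List.rel_of_pairwise_cons hs hx
      calc (l₁.take (k + 1)).sum ≤ (l₂.take (k + 1)).sum := ih hs' (k + 1)
        _ = (l₂.take k).sum + l₂.getD k 0 := take_succ_sum _ _
        _ ≤ (l₂.take k).sum + a := by
            exact Nat.add_le_add_left (getD_le_of_forall hle k) _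
        _ = ((a :: l₂).take (k + 1)).sum := by
            rw [List.take_succ_cons, List.sum_cons, Nat.add_comm]
  | @cons_cons l₁ l₂ a h ih =>
    rcases k with _ | k
    · simp
    · rw [List.take_succ_cons, List.take_succ_cons, List.sum_cons, List.sum_cons]
      exact Nat.add_le_add_left (ih hs.of_cons k) _

lemma sortDesc_sublist {S M : Multiset ℕ} (h : S ≤ M) : List.Sublist (sortDesc S) (sortDesc M) := by
  apply List.sublist_of_subperm_of_pairwise _ (sortDesc_sorted S) (sortDesc_sorted M)
  rw [← Multiset.coe_le, coe_sortDesc, coe_sortDesc]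
  exact h

/-- The sum of the `k` largest elements of `M`. -/
noncomputable def topSum (k : ℕ) (M : Multiset ℕ) : ℕ := ((sortDesc M).take k).sum

lemma sum_le_topSum {S M : Multiset ℕ} (h : S ≤ M) {k : ℕ} (hk : Multiset.card S ≤ k) :
    S.sum ≤ topSum k M := by
  have h1 : (sortDesc S).take k = sortDesc S :=
    List.take_of_length_le (by rw [length_sortDesc]; exact hk)
  have h2 : ((sortDesc S).take k).sum = S.sum := by
    rw [h1, ← Multiset.sum_coe, coe_sortDesc]
  rw [← h2]
  exact take_sum_le (sortDesc_sublist h) (sortDesc_sorted M) k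

lemma len_zero {X : ℕ → ℕ} (hX : FinSupported X) {n : ℕ} (hn : len X ≤ n) : X n = 0 :=
  (Nat.sInf_mem hX) n hn

lemma len_pos {X : ℕ → ℕ} (hX' : Antitone X) {n : ℕ} (hn : n < len X) : X n ≠ 0 := by
  intro h0
  have hmem : n ∈ {N | ∀ m, N ≤ m → X m = 0} := fun m hm =>
    Nat.le_zero.mp (h0 ▸ hX' hm)
  have := Nat.sInf_le hmem
  rw [← len] at this
  omega

lemma vals_eq {X : ℕ → ℕ} (hX : FinSupported X) (hX' : Antitone X) :
    vals X = (((List.range (len X)).map X : List ℕ) : Multiset ℕ) := by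
  rw [vals, Multiset.filter_eq_self]
  intro x hx
  simp only [Multiset.mem_coe, List.mem_map, List.mem_range] at hx
  obtain ⟨i, hi, rfl⟩ := hx
  exact len_pos hX' hi

lemma map_range_sorted {X : ℕ → ℕ} (hX' : Antitone X) (n : ℕ) :
    ((List.range n).map X).Pairwise (· ≥ ·) := by
  rw [List.pairwise_map]
  exact (List.pairwise_lt_range (n := n)).imp (fun h => hX' (le_of_lt h))

lemma sortDesc_vals {X : ℕ → ℕ} (hX : FinSupported X) (hX' : Antitone X) :
    sortDesc (vals X) = (List.range (len X)).map X := by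
  have h1 : Multiset.sort (vals X) (· ≤ ·) = ((List.range (len X)).map X).reverse := by
    refine (fun hp hs => List.Perm.eq_of_pairwise' (Multiset.pairwise_sort _ _) hs hp) ?_ ?_
    · rw [← Multiset.coe_eq_coe, Multiset.sort_eq, Multiset.coe_reverse]
      exact vals_eq hX hX'
    · exact List.pairwise_reverse.mpr (map_range_sorted hX' _)
  rw [sortDesc, h1, List.reverse_reverse]

lemma list_range_sum (X : ℕ → ℕ) (n : ℕ) :
    ((List.range n).map X).sum = ∑ i ∈ Finset.range n, X i := by
  induction n with
  | zero => simp
  | succ n ih => rw [List.range_succ, List.map_append, List.sum_append,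
      Finset.sum_range_succ, ih]; simp

lemma sum_range_min {X : ℕ → ℕ} (hX : FinSupported X) (a : ℕ) :
    ∑ i ∈ Finset.range (min a (len X)), X i = ∑ i ∈ Finset.range a, X i := by
  apply Finset.sum_subset (Finset.range_subset_range.mpr (min_le_left _ _))
  intro i hi hni
  simp only [Finset.mem_range] at hi hni
  exact len_zero hX (by omega)

lemma topSum_vals {X : ℕ → ℕ} (hX : FinSupported X) (hX' : Antitone X) (k : ℕ) :
    topSum k (vals X) = ∑ i ∈ Finset.range k, X i := by
  rw [topSum, sortDesc_vals hX hX', ← List.map_take, List.take_range, list_range_sum]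
  exact sum_range_min hX k

lemma prefix_le_vals {X : ℕ → ℕ} (hX : FinSupported X) (hX' : Antitone X) {a : ℕ}
    (ha : a ≤ len X) :
    ((((List.range a).map X : List ℕ)) : Multiset ℕ) ≤ vals X := by
  rw [vals_eq hX hX', Multiset.coe_le]
  exact ((List.range_sublist.mpr ha).map X).subperm

lemma le_add_split {S M N : Multiset ℕ} (h : S ≤ M + N) :
    ∃ S₁ S₂, S₁ ≤ M ∧ S₂ ≤ N ∧ S = S₁ + S₂ := by
  refine ⟨S ∩ M, S - S ∩ M, Multiset.inter_le_right, ?_, ?_⟩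
  · rw [Multiset.le_iff_count]
    intro x
    have h1 := Multiset.le_iff_count.mp h x
    rw [Multiset.count_add] at h1
    rw [Multiset.count_sub, Multiset.count_inter]
    omega
  · rw [add_tsub_cancel_of_le (Multiset.inter_le_left)]

lemma FinSupported.add {A B : ℕ → ℕ} (hA : FinSupported A) (hB : FinSupported B) :
    FinSupported (A + B) := by
  obtain ⟨N, hN⟩ := hA
  obtain ⟨M, hM⟩ := hB
  exact ⟨max N M, fun n hn => by
    simp [Pi.add_apply, hN n (le_trans (le_max_left _ _) hn),
      hM n (le_trans (le_max_right _ _) hn)]⟩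

lemma sum_merge (A B : ℕ → ℕ) (k : ℕ) :
    ∑ i ∈ Finset.range k, merge A B i = topSum k (vals A + vals B) :=
  sum_range_getD _ k

lemma key_partial_sum (A B C D : ℕ → ℕ)
    (hA : FinSupported A) (hB : FinSupported B) (hC : FinSupported C) (hD : FinSupported D)
    (hA' : Antitone A) (hB' : Antitone B) (hC' : Antitone C) (hD' : Antitone D) (k : ℕ) :
    ∑ i ∈ Finset.range k, merge (A + B) (C + D) i ≤
      ∑ i ∈ Finset.range k, (merge A C i + merge B D i) := by
  rw [sum_merge]
  set M := vals (A + B) + vals (C + D) with hM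
  set L := sortDesc M with hL
  have hS : ((L.take k : List ℕ) : Multiset ℕ) ≤ M := by
    rw [← coe_sortDesc M, Multiset.coe_le]
    exact (List.take_sublist _ _).subperm
  obtain ⟨S₁, S₂, h1, h2, hsplit⟩ := le_add_split hS
  set a := Multiset.card S₁ with ha
  set c := Multiset.card S₂ with hc
  have hcard : a + c ≤ k := by
    have := congrArg Multiset.card hsplit
    rw [Multiset.coe_card, Multiset.card_add] at this
    have hlen := List.length_take_le k L
    omega
  have htop : topSum k M = S₁.sum + S₂.sum := by
    rw [topSum, ← hL, ← Multiset.sum_coe, hsplit, Multiset.sum_add]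
  have hb1 : S₁.sum ≤ ∑ i ∈ Finset.range a, (A i + B i) := by
    have h := sum_le_topSum h1 (le_refl a)
    rwa [topSum_vals (hA.add hB) (hA'.add hB')] at h
  have hb2 : S₂.sum ≤ ∑ j ∈ Finset.range c, (C j + D j) := by
    have h := sum_le_topSum h2 (le_refl c)
    rwa [topSum_vals (hC.add hD) (hC'.add hD')] at h
  have hAC : ∑ i ∈ Finset.range a, A i + ∑ j ∈ Finset.range c, C j ≤
      ∑ i ∈ Finset.range k, merge A C i := by
    rw [sum_merge]
    have T1 := prefix_le_vals hA hA' (min_le_right a (len A))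
    have T2 := prefix_le_vals hC hC' (min_le_right c (len C))
    have hT := sum_le_topSum (add_le_add T1 T2) (k := k) (by
      rw [Multiset.card_add, Multiset.coe_card, Multiset.coe_card,
        List.length_map, List.length_map, List.length_range, List.length_range]
      omega)
    rw [Multiset.sum_add, Multiset.sum_coe, Multiset.sum_coe, list_range_sum, list_range_sum,
      sum_range_min hA, sum_range_min hC] at hT
    exact hT
  have hBD : ∑ i ∈ Finset.range a, B i + ∑ j ∈ Finset.range c, D j ≤
      ∑ i ∈ Finset.range k, merge B D i := by
    rw [sum_merge]
    have T1 := prefix_le_vals hB hB' (min_le_right a (len B))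
    have T2 := prefix_le_vals hD hD' (min_le_right c (len D))
    have hT := sum_le_topSum (add_le_add T1 T2) (k := k) (by
      rw [Multiset.card_add, Multiset.coe_card, Multiset.coe_card,
        List.length_map, List.length_map, List.length_range, List.length_range]
      omega)
    rw [Multiset.sum_add, Multiset.sum_coe, Multiset.sum_coe, list_range_sum, list_range_sum,
      sum_range_min hB, sum_range_min hD] at hT
    exact hT
  rw [Finset.sum_add_distrib]
  calc topSum k M = S₁.sum + S₂.sum := htop
    _ ≤ (∑ i ∈ Finset.range a, (A i + B i)) + ∑ j ∈ Finset.range c, (C j + D j) :=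
        Nat.add_le_add hb1 hb2
    _ = (∑ i ∈ Finset.range a, A i + ∑ j ∈ Finset.range c, C j) +
        (∑ i ∈ Finset.range a, B i + ∑ j ∈ Finset.range c, D j) := by
        rw [Finset.sum_add_distrib, Finset.sum_add_distrib]; ring
    _ ≤ _ := Nat.add_le_add hAC hBD

/-- the interchange inequality between merging (horizontal stacking) and
pointwise addition (vertical stacking) of Young diagrams:
`merge (A ⊕ B) (C ⊕ D) ≤ merge A C ⊕ merge B D` lexicographically. -/
theorem merge_add_interchange (A B C D : ℕ → ℕ)
    (hA : FinSupported A) (hB : FinSupported B) (hC : FinSupported C) (hD : FinSupported D)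
    (hA' : Antitone A) (hB' : Antitone B) (hC' : Antitone C) (hD' : Antitone D) :
    LexLe (merge (A + B) (C + D)) (merge A C + merge B D) := by
  classical
  set E := merge (A + B) (C + D) with hE
  set F := merge A C + merge B D with hF
  by_cases hEF : E = F
  · exact Or.inl hEF
  · right
    have hne : ∃ n, E n ≠ F n := by
      by_contra h
      push_neg at h
      exact hEF (funext h)
    have hspec : E (Nat.find hne) ≠ F (Nat.find hne) := Nat.find_spec hne
    have hmin : ∀ m, m < Nat.find hne → E m = F m := fun m hm =>
      not_ne_iff.mp (Nat.find_min hne hm)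
    refine ⟨Nat.find hne, hmin, ?_⟩
    set n := Nat.find hne with hn
    have hkey := key_partial_sum A B C D hA hB hC hD hA' hB' hC' hD' (n + 1)
    have heq : ∀ m ∈ Finset.range n, merge (A + B) (C + D) m =
        merge A C m + merge B D m := fun m hm => hmin m (Finset.mem_range.mp hm)
    rw [Finset.sum_range_succ, Finset.sum_range_succ, Finset.sum_congr rfl heq] at hkey
    have h1 : E n ≤ merge A C n + merge B D n := Nat.le_of_add_le_add_left hkey
    exact lt_of_le_of_ne h1 hspec
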